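/- Let A = {0,1}, Â = {0}, and ρ(x,y) := |x − y|. Then: (i) for any probability distribution P' on A, R₁(P', D) = 0 if P'(1) ≤ D and R₁(P', D) = ∞ otherwise. (ii) If (Xₙ; n≥1) are i.i.d. with P(X₁ = 1) = p ∈ (0,1), then at the distortion level D = p (which does not belong to D_c(P)), with probability 1 the plug-in estimator fails to converge: liminf_{n→∞} R₁(P_{X₁ⁿ}, p) = 0 while limsup_{n→∞} R₁(P_{X₁ⁿ}, p) = ∞. -/

import Mathlib

open MeasureTheory ProbabilityTheory Filter Topology Set
open scoped ENNReal NNReal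

noncomputable section

open scoped Classical in
/-- Relative entropy `H(μ‖ν)`, with values in `ℝ≥0∞` and the convention that it is `∞`
unless `μ ≪ ν` and the log-likelihood ratio is integrable. -/
def relEnt {X : Type*} [MeasurableSpace X] (μ ν : Measure X) : ℝ≥0∞ :=
  if μ ≪ ν ∧ Integrable (llr μ ν) μ then ENNReal.ofReal (∫ x, llr μ ν x ∂μ) else ⊤

/-- The set `W(P,D)` of couplings with first marginal `P` and expected distortion at most `D`. -/
def Wset {A B : Type*} [MeasurableSpace A] [MeasurableSpace B]
    (ρ : A → B → ℝ) (P : Measure A) (D : ℝ) : Set (Measure (A × B)) :=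
  {W | IsProbabilityMeasure W ∧ W.fst = P ∧
    ∫⁻ p, ENNReal.ofReal (ρ p.1 p.2) ∂W ≤ ENNReal.ofReal D}

/-- `R₁(P,Q,D) := inf_{W ∈ W(P,D)} H(W ‖ P × Q)`, with `inf ∅ = ∞`. -/
def RQ {A B : Type*} [MeasurableSpace A] [MeasurableSpace B]
    (ρ : A → B → ℝ) (P : Measure A) (Q : Measure B) (D : ℝ) : ℝ≥0∞ :=
  ⨅ W ∈ Wset ρ P D, relEnt W (P.prod Q)

/-- `R₁^Θ(P,D) := inf_θ R₁(P,Q_θ,D)`. -/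
def RTh {A B Θ : Type*} [MeasurableSpace A] [MeasurableSpace B]
    (ρ : A → B → ℝ) (Q : Θ → Measure B) (P : Measure A) (D : ℝ) : ℝ≥0∞ :=
  ⨅ θ : Θ, RQ ρ P (Q θ) D

/-- The (first-order) rate-distortion function
`R₁(P,D) := inf_{W ∈ W(P,D)} H(W ‖ W^A × W^Â)`, with `inf ∅ = ∞`. -/
def Rnp {A B : Type*} [MeasurableSpace A] [MeasurableSpace B]
    (ρ : A → B → ℝ) (P : Measure A) (D : ℝ) : ℝ≥0∞ :=
  ⨅ W ∈ Wset ρ P D, relEnt W (W.fst.prod W.snd)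

/-- The empirical distribution of `(x 0, …, x (n-1))`. -/
def empMeas {A : Type*} [MeasurableSpace A] (x : ℕ → A) (n : ℕ) : Measure A :=
  (n : ℝ≥0∞)⁻¹ • ∑ k ∈ Finset.range n, Measure.dirac (x k)

/-- The shift map on sequences. -/
def shift {A : Type*} : (ℕ → A) → (ℕ → A) := fun x n => x (n + 1)

/-- `D_c^Θ(P)`: the set of distortion levels where `D ↦ R₁^Θ(P,D)` is continuous from the
left (the left limit being the infimum over `λ ∈ (0,1)` of `R₁^Θ(P,λD)`, by monotonicity),
with the conventions that `0 ∈ D_c^Θ(P)` and that `D ∈ D_c^Θ(P)` whenever `R₁^Θ(P,D) = ∞`. -/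
def DcTh {A B Θ : Type*} [MeasurableSpace A] [MeasurableSpace B]
    (ρ : A → B → ℝ) (Q : Θ → Measure B) (P : Measure A) : Set ℝ :=
  {D | 0 ≤ D ∧ (D = 0 ∨ RTh ρ Q P D = ⊤ ∨
    RTh ρ Q P D = ⨅ l ∈ Set.Ioo (0:ℝ) 1, RTh ρ Q P (l * D))}

/-- `D_c(P)` for the rate-distortion function. -/
def DcNp {A B : Type*} [MeasurableSpace A] [MeasurableSpace B]
    (ρ : A → B → ℝ) (P : Measure A) : Set ℝ :=
  {D | 0 ≤ D ∧ (D = 0 ∨ Rnp ρ P D = ⊤ ∨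
    Rnp ρ P D = ⨅ l ∈ Set.Ioo (0:ℝ) 1, Rnp ρ P (l * D))}

/-- `D_c(P,Q)` for `R₁(P,Q,·)`. -/
def DcQ {A B : Type*} [MeasurableSpace A] [MeasurableSpace B]
    (ρ : A → B → ℝ) (P : Measure A) (Q : Measure B) : Set ℝ :=
  {D | 0 ≤ D ∧ (D = 0 ∨ RQ ρ P Q D = ⊤ ∨
    RQ ρ P Q D = ⨅ l ∈ Set.Ioo (0:ℝ) 1, RQ ρ P Q (l * D))}

/-- The union of distortion balls of radius `M` centered at points of `K`. -/
def Bset {A B : Type*} (ρ : A → B → ℝ) (K : Set A) (M : ℝ) : Set B :=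
  {y | ∃ x ∈ K, ρ x y ≤ M}

namespace ConvAux

abbrev ρ2 : Fin 2 → Fin 1 → ℝ := fun x y => |((x : ℕ) : ℝ) - ((y : ℕ) : ℝ)|

abbrev gg : Fin 2 → ℝ := fun x => if x = 1 then 1 else 0

lemma map_fst_eq (W : Measure (Fin 2 × Fin 1)) :
    W.fst.map (fun x => (x, (0 : Fin 1))) = W := by
  rw [Measure.fst, Measure.map_map (measurable_of_countable _) measurable_fst]
  have h : ((fun x : Fin 2 => (x, (0:Fin 1))) ∘ Prod.fst) = id := by
    funext q; exact Prod.ext rfl (Subsingleton.elim _ _)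
  rw [h, Measure.map_id]

lemma dist_eq (W : Measure (Fin 2 × Fin 1)) :
    ∫⁻ q, ENNReal.ofReal (ρ2 q.1 q.2) ∂W = W.fst {1} := by
  rw [lintegral_fintype]
  have h1 : W.fst {1} = W {((1:Fin 2), (0:Fin 1))} := by
    rw [Measure.fst_apply (measurableSet_singleton _)]
    congr 1
    ext q
    constructor
    · rintro hq
      have : q.1 = 1 := hq
      have h2 : q.2 = 0 := Subsingleton.elim _ _
      simp [Set.mem_singleton_iff, Prod.ext_iff, this, h2]
    · rintro hq
      simp only [Set.mem_singleton_iff] at hq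
      simp [Set.mem_preimage, hq]
  rw [h1]
  rw [Fintype.sum_prod_type]
  simp [Fin.sum_univ_two, Fin.sum_univ_one]
  norm_num [ρ2, Fin.val_zero, Fin.val_one]

lemma eq_dirac (Q : Measure (Fin 1)) [IsProbabilityMeasure Q] : Q = Measure.dirac 0 := by
  ext s hs
  rcases s.eq_empty_or_nonempty with h | h
  · simp [h]
  · have hu : s = Set.univ := by
      obtain ⟨y, hy⟩ := h
      apply Set.eq_univ_of_forall
      intro z
      rwa [Subsingleton.elim z y]
    simp [hu]

lemma relEnt_self {X : Type*} [MeasurableSpace X] (ν : Measure X) [SigmaFinite ν] :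
    relEnt ν ν = 0 := by
  have hllr : llr ν ν =ᵐ[ν] 0 := by
    filter_upwards [ν.rnDeriv_self] with x hx
    simp [llr, hx]
  rw [relEnt, if_pos]
  · rw [integral_congr_ae hllr]
    simp
  · exact ⟨Measure.AbsolutelyContinuous.rfl, (integrable_zero _ _ _).congr hllr.symm⟩

lemma Rnp_eq_zero (P' : Measure (Fin 2)) [IsProbabilityMeasure P'] {D : ℝ}
    (h : P' {1} ≤ ENNReal.ofReal D) : Rnp ρ2 P' D = 0 := by
  refine le_antisymm ?_ zero_le
  set W₀ : Measure (Fin 2 × Fin 1) := P'.map (fun x => (x, 0)) with hW₀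
  have hmeas : Measurable (fun x : Fin 2 => (x, (0:Fin 1))) := measurable_of_countable _
  haveI : IsProbabilityMeasure W₀ := Measure.isProbabilityMeasure_map hmeas.aemeasurable
  have hfst : W₀.fst = P' := by
    rw [hW₀, Measure.fst, Measure.map_map measurable_fst hmeas]
    have h2 : (Prod.fst ∘ fun x : Fin 2 => (x, (0:Fin 1))) = id := rfl
    rw [h2, Measure.map_id]
  have hmem : W₀ ∈ Wset ρ2 P' D := ⟨inferInstance, hfst, by rw [dist_eq, hfst]; exact h⟩
  have hprod : W₀.fst.prod W₀.snd = W₀ := by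
    rw [eq_dirac W₀.snd, Measure.prod_dirac, hfst, ← hW₀]
  calc Rnp ρ2 P' D ≤ relEnt W₀ (W₀.fst.prod W₀.snd) := iInf₂_le W₀ hmem
    _ = 0 := by rw [hprod]; exact relEnt_self W₀

lemma Rnp_eq_top (P' : Measure (Fin 2)) {D : ℝ}
    (h : ¬ P' {1} ≤ ENNReal.ofReal D) : Rnp ρ2 P' D = ⊤ := by
  rw [Rnp, iInf_eq_top]
  intro W
  rw [iInf_eq_top]
  intro hW
  refine absurd ?_ h
  have := hW.2.2
  rwa [dist_eq, hW.2.1] at this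


lemma empMeas_prob (x : ℕ → Fin 2) {n : ℕ} (hn : n ≠ 0) :
    IsProbabilityMeasure (empMeas x n) := by
  constructor
  rw [empMeas, Measure.smul_apply, Measure.finset_sum_apply, smul_eq_mul]
  simp only [Measure.dirac_apply, Set.indicator_univ, Pi.one_apply, Finset.sum_const,
    Finset.card_range, nsmul_eq_mul, mul_one]
  exact ENNReal.inv_mul_cancel (by exact_mod_cast hn) (ENNReal.natCast_ne_top n)

lemma empMeas_one (x : ℕ → Fin 2) (n : ℕ) :
    empMeas x n {1} = (n : ℝ≥0∞)⁻¹ * ENNReal.ofReal (∑ k ∈ Finset.range n, gg (x k)) := by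
  rw [empMeas, Measure.smul_apply, Measure.finset_sum_apply, smul_eq_mul]
  congr 1
  calc ∑ k ∈ Finset.range n, (Measure.dirac (x k)) {1}
      = ∑ k ∈ Finset.range n, ENNReal.ofReal (gg (x k)) := by
        refine Finset.sum_congr rfl fun k _ => ?_
        rw [Measure.dirac_apply]
        by_cases h : x k = 1 <;> simp [gg, h, Set.indicator_apply]
    _ = ENNReal.ofReal (∑ k ∈ Finset.range n, gg (x k)) :=
        (ENNReal.ofReal_sum_of_nonneg (fun k _ => by
          by_cases h : x k = 1 <;> simp [gg, h])).symm

lemma empMeas_cond (x : ℕ → Fin 2) {n : ℕ} (hn : n ≠ 0) {p : ℝ} (hp0 : 0 ≤ p) :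
    (empMeas x n {1} ≤ ENNReal.ofReal p ↔
      ∑ k ∈ Finset.range n, (gg (x k) - p) ≤ 0) := by
  have hS0 : (0:ℝ) ≤ ∑ k ∈ Finset.range n, gg (x k) :=
    Finset.sum_nonneg fun k _ => by by_cases h : x k = 1 <;> simp [gg, h]
  have hn0 : (n : ℝ≥0∞) ≠ 0 := by exact_mod_cast hn
  rw [empMeas_one, mul_comm, ← div_eq_mul_inv,
    ENNReal.div_le_iff_le_mul (Or.inl hn0) (Or.inl (ENNReal.natCast_ne_top n)),
    ← ENNReal.ofReal_natCast n, ← ENNReal.ofReal_mul hp0,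
    ENNReal.ofReal_le_ofReal_iff (by positivity),
    Finset.sum_sub_distrib, Finset.sum_const, Finset.card_range, sub_nonpos, nsmul_eq_mul]
  constructor <;> intro h <;> linarith [h, mul_comm p (n:ℝ)]


lemma walk_osc {Ω : Type*} [MeasurableSpace Ω] (μ : Measure Ω) [IsProbabilityMeasure μ]
    (X : ℕ → Ω → Fin 2) (hX : ∀ n, Measurable (X n))
    (hindep : iIndepFun X μ)
    (P : Measure (Fin 2)) (hid : ∀ n, μ.map (X n) = P)
    (p : ℝ) (hp : p ∈ Set.Ioo (0:ℝ) 1) (hP1 : P {1} = ENNReal.ofReal p) :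
    ∀ᵐ ω ∂μ, (∀ N, ∃ m ≥ N, 0 < ∑ k ∈ Finset.range m, (gg (X k ω) - p))
      ∧ (∀ N, ∃ m ≥ N, ∑ k ∈ Finset.range m, (gg (X k ω) - p) < 0) := by
  classical
  set Y : ℕ → Ω → ℝ := fun k => gg ∘ X k with hY
  have hgm : Measurable gg := measurable_of_countable _
  have hYm : ∀ k, StronglyMeasurable (Y k) := fun k => (hgm.comp (hX k)).stronglyMeasurable
  have hYindep : iIndepFun Y μ :=
    hindep.comp (fun _ => gg) (fun _ => hgm)
  set ℱ := Filtration.natural Y hYm with hℱ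
  set W : ℕ → Ω → ℝ := fun n ω => ∑ k ∈ Finset.range (n+1), (Y k ω - p) with hW
  have hYind : ∀ k, Y k = (X k ⁻¹' {1}).indicator (fun _ => (1:ℝ)) := by
    intro k
    funext ω
    by_cases h : X k ω = 1 <;> simp [Y, gg, h, Set.indicator_apply]
  have hYint : ∀ k, Integrable (Y k) μ := by
    intro k
    rw [hYind k]
    exact (integrable_const (1:ℝ)).indicator (hX k (measurableSet_singleton 1))
  have hWint : ∀ n, Integrable (W n) μ :=
    fun n => integrable_finset_sum _ fun k _ => (hYint k).sub (integrable_const p)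
  have hEY : ∀ k, ∫ ω, Y k ω ∂μ = p := by
    intro k
    rw [hYind k, integral_indicator_const (1:ℝ) (hX k (measurableSet_singleton 1)), measureReal_def,
      ← Measure.map_apply (hX k) (measurableSet_singleton 1), hid k, hP1, smul_eq_mul, mul_one,
      ENNReal.toReal_ofReal hp.1.le]
  have hadapt : StronglyAdapted ℱ W := by
    intro n
    refine Finset.stronglyMeasurable_fun_sum _ fun k hk => ?_
    exact ((Filtration.stronglyAdapted_natural hYm k).mono
      (ℱ.mono (Nat.lt_succ_iff.mp (Finset.mem_range.mp hk)))).sub stronglyMeasurable_const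
  have hWsucc : ∀ j, W (j+1) = W j + fun ω => Y (j+1) ω - p := by
    intro j
    funext ω
    simp only [W, Finset.sum_range_succ, Pi.add_apply]
  have hmart : Martingale W ℱ μ := by
    refine ⟨hadapt, fun i j hij => ?_⟩
    induction j, hij using Nat.le_induction with
    | base => rw [condExp_of_stronglyMeasurable (ℱ.le i) (hadapt i) (hWint i)]
    | succ j hij ih =>
      have h1 : μ[W (j+1)|ℱ i] =ᵐ[μ] μ[W j|ℱ i] + μ[(fun ω => Y (j+1) ω - p)|ℱ i] := by
        rw [hWsucc j]
        exact condExp_add (hWint j) ((hYint _).sub (integrable_const p)) _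
      have h2 : μ[(fun ω => Y (j+1) ω - p)|ℱ i] =ᵐ[μ] fun _ => (0:ℝ) := by
        have h3 : μ[(fun ω => Y (j+1) ω - p)|ℱ i]
            =ᵐ[μ] μ[Y (j+1)|ℱ i] - μ[(fun _ => p)|ℱ i] :=
          condExp_sub (hYint _) (integrable_const p) _
        have h4 : μ[Y (j+1)|ℱ i] =ᵐ[μ] fun _ => ∫ ω, Y (j+1) ω ∂μ :=
          hYindep.condExp_natural_ae_eq_of_lt hYm (Nat.lt_succ_of_le hij)
        have h5 : μ[(fun _ => p)|ℱ i] = fun _ => p := condExp_const (ℱ.le i) p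
        filter_upwards [h3, h4] with ω h3ω h4ω
        rw [h3ω, Pi.sub_apply, h4ω, h5, hEY, sub_self]
      filter_upwards [h1, h2, ih] with ω h1ω h2ω ihω
      rw [h1ω, Pi.add_apply, h2ω, ihω, add_zero]
  have hincr : ∀ ω i, W (i+1) ω - W i ω = Y (i+1) ω - p := by
    intro ω i
    simp only [W, Finset.sum_range_succ]
    ring
  have habs : ∀ ω i, |W (i+1) ω - W i ω| ≤ ((1:ℝ≥0):ℝ) := by
    intro ω i
    rw [hincr]
    by_cases h : X (i+1) ω = 1
    · have hy : Y (i+1) ω = 1 := by simp [Y, gg, h]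
      rw [hy, abs_le]
      push_cast
      constructor <;> nlinarith [hp.1, hp.2]
    · have hy : Y (i+1) ω = 0 := by simp [Y, gg, h]
      rw [hy, abs_le]
      push_cast
      constructor <;> nlinarith [hp.1, hp.2]
  have h1 := hmart.submartingale.bddAbove_iff_exists_tendsto (R := 1)
    (ae_of_all _ fun ω i => habs ω i)
  have habsneg : ∀ (ω : Ω) (i : ℕ), |(-W) (i+1) ω - (-W) i ω| ≤ ((1:ℝ≥0):ℝ) := by
    intro ω i
    simp only [Pi.neg_apply]
    rw [show -W (i+1) ω - -W i ω = -(W (i+1) ω - W i ω) by ring, abs_neg]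
    exact habs ω i
  have h2 := hmart.neg.submartingale.bddAbove_iff_exists_tendsto (R := 1)
    (ae_of_all _ fun ω i => habsneg ω i)
  have hδ : (0:ℝ) < min p (1 - p) := lt_min hp.1 (by linarith [hp.2])
  have hlow : ∀ (ω : Ω) (n : ℕ), min p (1-p) ≤ |W (n+1) ω - W n ω| := by
    intro ω n
    rw [hincr]
    by_cases h : X (n+1) ω = 1
    · have hy : Y (n+1) ω = 1 := by simp [Y, gg, h]
      rw [hy, abs_of_nonneg (by linarith [hp.2])]
      exact min_le_right _ _
    · have hy : Y (n+1) ω = 0 := by simp [Y, gg, h]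
      rw [hy, zero_sub, abs_neg, abs_of_nonneg hp.1.le]
      exact min_le_left _ _
  have hnotconv : ∀ ω : Ω, ¬ ∃ c, Tendsto (fun n => W n ω) atTop (𝓝 c) := by
    rintro ω ⟨c, hc⟩
    have hdiff : Tendsto (fun n => W (n+1) ω - W n ω) atTop (𝓝 (c - c)) :=
      (hc.comp (tendsto_add_atTop_nat 1)).sub hc
    rw [sub_self] at hdiff
    rw [Metric.tendsto_atTop] at hdiff
    obtain ⟨N, hN⟩ := hdiff (min p (1-p)) hδ
    have hd := hN N le_rfl
    rw [Real.dist_eq, sub_zero] at hd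
    exact absurd hd (not_lt.2 (hlow ω N))
  filter_upwards [h1, h2] with ω hω1 hω2
  have hnb1 : ¬ BddAbove (Set.range fun n => W n ω) := fun hb => hnotconv ω (hω1.mp hb)
  have hnb2 : ¬ BddAbove (Set.range fun n => (-W) n ω) := by
    intro hb
    obtain ⟨c, hc⟩ := hω2.mp hb
    refine hnotconv ω ⟨-c, ?_⟩
    simpa using hc.neg
  have key : ∀ (V : ℕ → ℝ), ¬ BddAbove (Set.range V) → ∀ N, ∃ n ≥ N, 0 < V n := by
    intro V hV N
    by_contra hcon
    push_neg at hcon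
    refine hV ⟨((Finset.range (N+1)).sup'
      (Finset.nonempty_range_iff.2 (Nat.succ_ne_zero N)) V) ⊔ 0, ?_⟩
    rintro _ ⟨n, rfl⟩
    rcases le_or_gt n N with h | h
    · exact le_sup_of_le_left (Finset.le_sup' V (Finset.mem_range.2 (Nat.lt_succ_of_le h)))
    · exact le_sup_of_le_right (hcon n h.le)
  constructor
  · intro N
    obtain ⟨n, hn, hpos⟩ := key _ hnb1 N
    refine ⟨n+1, le_trans hn (Nat.le_succ n), ?_⟩
    rw [hW] at hpos
    simpa [hY, Function.comp] using hpos
  · intro N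
    obtain ⟨n, hn, hpos⟩ := key _ hnb2 N
    refine ⟨n+1, le_trans hn (Nat.le_succ n), ?_⟩
    have hlt : W n ω < 0 := by
      have := hpos
      simp only [Pi.neg_apply] at this
      linarith
    rw [hW] at hlt
    simpa [hY, Function.comp] using hlt

end ConvAux

/-- Convergence failure at `D ∉ D_c(P)`: with `A = {0,1}`, `Â = {0}`
and `ρ(x,y) = |x−y|`: (i) `R₁(P',D) = 0` if `P'(1) ≤ D` and `= ∞` otherwise; (ii) for an
i.i.d. source with `P(X₁=1) = p ∈ (0,1)`, at `D = p` (which is not in `D_c(P)`), with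
probability 1 the plug-in estimator fails to converge:
`liminf_n R₁(P_{X₁ⁿ},p) = 0` while `limsup_n R₁(P_{X₁ⁿ},p) = ∞`. -/
theorem convergence_failure_example
    {Ω : Type*} [MeasurableSpace Ω] (μ : Measure Ω) [IsProbabilityMeasure μ]
    (X : ℕ → Ω → Fin 2) (hX : ∀ n, Measurable (X n))
    (hindep : iIndepFun X μ)
    (P : Measure (Fin 2)) [IsProbabilityMeasure P]
    (hid : ∀ n, μ.map (X n) = P)
    (p : ℝ) (hp : p ∈ Set.Ioo (0:ℝ) 1) (hP1 : P {1} = ENNReal.ofReal p) :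
    (∀ (P' : Measure (Fin 2)), IsProbabilityMeasure P' → ∀ D : ℝ, 0 ≤ D →
      ((P' {1} ≤ ENNReal.ofReal D →
        Rnp (fun (x : Fin 2) (y : Fin 1) => |((x : ℕ) : ℝ) - ((y : ℕ) : ℝ)|) P' D = 0)
      ∧ (¬ P' {1} ≤ ENNReal.ofReal D →
        Rnp (fun (x : Fin 2) (y : Fin 1) => |((x : ℕ) : ℝ) - ((y : ℕ) : ℝ)|) P' D = ⊤)))
    ∧ p ∉ DcNp (fun (x : Fin 2) (y : Fin 1) => |((x : ℕ) : ℝ) - ((y : ℕ) : ℝ)|) P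
    ∧ (∀ᵐ ω ∂μ,
        liminf
          (fun n => Rnp (fun (x : Fin 2) (y : Fin 1) => |((x : ℕ) : ℝ) - ((y : ℕ) : ℝ)|)
            (empMeas (fun k => X k ω) n) p) atTop = 0
        ∧ limsup
          (fun n => Rnp (fun (x : Fin 2) (y : Fin 1) => |((x : ℕ) : ℝ) - ((y : ℕ) : ℝ)|)
            (empMeas (fun k => X k ω) n) p) atTop = ⊤) := by
  
  have h0 : Rnp (fun (x : Fin 2) (y : Fin 1) => |((x : ℕ) : ℝ) - ((y : ℕ) : ℝ)|) P p = 0 :=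
    ConvAux.Rnp_eq_zero P hP1.le
  refine ⟨?_, ?_, ?_⟩
  · intro P' hP' D hD
    haveI := hP'
    exact ⟨fun h => ConvAux.Rnp_eq_zero P' h, fun h => ConvAux.Rnp_eq_top P' h⟩
  · rintro ⟨-, h | h | h⟩
    · exact absurd h (ne_of_gt hp.1)
    · exact absurd (h0.symm.trans h) (by simp)
    · have htop : (⨅ l ∈ Set.Ioo (0:ℝ) 1,
          Rnp (fun (x : Fin 2) (y : Fin 1) => |((x : ℕ) : ℝ) - ((y : ℕ) : ℝ)|) P (l*p)) = ⊤ := by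
        refine le_antisymm le_top (le_iInf₂ fun l hl => ?_)
        refine (ConvAux.Rnp_eq_top P ?_).ge
        rw [hP1]
        refine not_le.2 ((ENNReal.ofReal_lt_ofReal_iff hp.1).2 ?_)
        nlinarith [hl.1, hl.2, hp.1]
      exact absurd (h0.symm.trans (h.trans htop)) (by simp)
  · filter_upwards [ConvAux.walk_osc μ X hX hindep P hid p hp hP1] with ω hω
    obtain ⟨hpos, hneg⟩ := hω
    constructor
    · refine le_antisymm ?_ zero_le
      refine liminf_le_of_frequently_le ?_
      rw [frequently_atTop]
      intro N
      obtain ⟨m, hm, hle⟩ := hneg (max N 1)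
      have hm1 : m ≠ 0 := by
        have := le_trans (le_max_right N 1) hm
        omega
      haveI := ConvAux.empMeas_prob (fun k => X k ω) hm1
      refine ⟨m, le_trans (le_max_left _ _) hm, ?_⟩
      exact le_of_eq (ConvAux.Rnp_eq_zero _
        ((ConvAux.empMeas_cond (fun k => X k ω) hm1 hp.1.le).mpr hle.le))
    · refine top_unique ?_
      refine le_limsup_of_frequently_le ?_
      rw [frequently_atTop]
      intro N
      obtain ⟨m, hm, hlt⟩ := hpos (max N 1)
      have hm1 : m ≠ 0 := by
        have := le_trans (le_max_right N 1) hm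
        omega
      refine ⟨m, le_trans (le_max_left _ _) hm, ?_⟩
      exact ge_of_eq (ConvAux.Rnp_eq_top _ (fun hc =>
        absurd ((ConvAux.empMeas_cond (fun k => X k ω) hm1 hp.1.le).mp hc) (not_le.2 hlt)))
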